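/- Let k be a field, A a non-unital k-algebra, and U := Unitization k A its unitalization. Let P be a finitely generated projective left U-module, and set P♯ := (P ⧸ A•P) ⊗_k U, a left U-module via the action of U on the right tensor factor. Then: (i) P♯ is a finitely generated projective (indeed free) U-module; (ii) there exist U-linear maps φ : P → P♯ and ψ : P♯ → P such that (id_P − ψ∘φ)(P) ⊆ A•P and (id_{P♯} − φ∘ψ)(P♯) ⊆ A•P♯; and (iii) for any such φ and ψ, letting E denote the two-term chain complex with P in degree 1, P♯ in degree 0 and differential φ, the inclusion of the subcomplex E·A (with degree-n term A•E_n) into E is a homotopy equivalence of chain complexes. -/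

import Mathlib

open CategoryTheory
open scoped TensorProduct

section Subcomplex

lemma smul_top_le {R : Type} [Ring R] {X Y : Type} [AddCommGroup X] [Module R X]
    [AddCommGroup Y] [Module R Y] (I : Ideal R) (f : X →ₗ[R] Y) :
    ∀ x ∈ I • (⊤ : Submodule R X), f x ∈ I • (⊤ : Submodule R Y) := by
  intro x hx
  have h1 : f x ∈ (I • (⊤ : Submodule R X)).map f := Submodule.mem_map_of_mem hx
  rw [Submodule.map_smul''] at h1
  have h2 : I • (⊤ : Submodule R X).map f ≤ I • (⊤ : Submodule R Y) :=
    smul_mono_right I le_top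
  exact h2 h1

/-- The subcomplex `M·I` of a chain complex `M` of left `R`-modules, whose degree-`n` term is
the submodule `I • M_n` generated by `{a • m : a ∈ I, m ∈ M_n}`. -/
def smulSubcomplex {R : Type} [Ring R] (I : Ideal R)
    (M : ChainComplex (ModuleCat.{0} R) ℤ) : ChainComplex (ModuleCat.{0} R) ℤ where
  X n := ModuleCat.of R (I • (⊤ : Submodule R (M.X n)) : Submodule R (M.X n))
  d i j := ModuleCat.ofHom (LinearMap.restrict (M.d i j).hom (smul_top_le I (M.d i j).hom))
  shape i j h := by
    ext x
    first
      | exact congrArg (fun f => ModuleCat.Hom.hom f x.1) (M.shape i j h)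
      | simp [M.shape i j h]
  d_comp_d' i j k _ _ := by
    ext x
    first
      | exact congrArg (fun f => ModuleCat.Hom.hom f x.1) (M.d_comp_d i j k)
      | simp [LinearMap.restrict_apply]

/-- The inclusion chain map `M·I ⟶ M`. -/
def smulSubcomplexIncl {R : Type} [Ring R] (I : Ideal R)
    (M : ChainComplex (ModuleCat.{0} R) ℤ) : smulSubcomplex I M ⟶ M where
  f n := ModuleCat.ofHom (I • (⊤ : Submodule R (M.X n))).subtype
  comm' i j _ := by
    ext x
    rfl

end Subcomplex

variable (k : Type) [Field k] (A : Type) [NonUnitalRing A] [Module k A]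
  [SMulCommClass k A A] [IsScalarTower k A A]
  (P : Type) [AddCommGroup P] [Module (Unitization k A) P]

/-- The copy of the non-unital algebra `A` inside its unitalization `Unitization k A`: the
two-sided ideal of elements with vanishing scalar component. -/
noncomputable def idealA : Ideal (Unitization k A) :=
  RingHom.ker (Unitization.fstHom k A).toRingHom

/-- The submodule `A•P` of a `Unitization k A`-module `P`. -/
noncomputable def AP : Submodule (Unitization k A) P :=
  idealA k A • (⊤ : Submodule (Unitization k A) P)

/-- The quotient `P ⧸ A•P` is killed by `A`, hence is a `k`-vector space. -/
noncomputable instance quotKMod : Module k (P ⧸ AP k A P) :=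
  Module.compHom _ (algebraMap k (Unitization k A))

/-- `P♯ := (P ⧸ A•P) ⊗ₖ U` where `U = Unitization k A`. -/
noncomputable def Psharp : Type := (P ⧸ AP k A P) ⊗[k] (Unitization k A)

noncomputable instance : AddCommGroup (Psharp k A P) :=
  inferInstanceAs (AddCommGroup ((P ⧸ AP k A P) ⊗[k] (Unitization k A)))

/-- `P♯` is a left `U`-module via the action of `U` on the right tensor factor. -/
noncomputable instance : Module (Unitization k A) (Psharp k A P) where
  smul u x := LinearMap.lTensor (P ⧸ AP k A P) (LinearMap.mulLeft k u) x
  one_smul x := by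
    show LinearMap.lTensor _ (LinearMap.mulLeft k 1) x = x
    rw [LinearMap.mulLeft_one, LinearMap.lTensor_id]; rfl
  mul_smul u v x := by
    show LinearMap.lTensor _ (LinearMap.mulLeft k (u * v)) x = _
    rw [LinearMap.mulLeft_mul, LinearMap.lTensor_comp]
    rfl
  smul_zero u := map_zero _
  smul_add u x y := map_add _ x y
  add_smul u v x := by
    show LinearMap.lTensor _ (LinearMap.mulLeft k (u + v)) x = _
    have : LinearMap.mulLeft k (u + v) = LinearMap.mulLeft k u + LinearMap.mulLeft k v :=
      LinearMap.ext fun w => by simp [add_mul]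
    rw [this, LinearMap.lTensor_add]
    rfl
  zero_smul x := by
    show LinearMap.lTensor _ (LinearMap.mulLeft k (0 : Unitization k A)) x = 0
    have : LinearMap.mulLeft k (0 : Unitization k A) = 0 :=
      LinearMap.ext fun w => by simp
    rw [this, LinearMap.lTensor_zero]; rfl

/-- The terms of the two-term complex `E = (P → P♯)`: `P` in degree `1`, `P♯` in degree `0`,
and `0` elsewhere. -/
noncomputable def EX (n : ℤ) : ModuleCat.{0} (Unitization k A) :=
  if n = 1 then ModuleCat.of (Unitization k A) P
  else if n = 0 then ModuleCat.of (Unitization k A) (Psharp k A P)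
  else ModuleCat.of (Unitization k A) PUnit

lemma EX_one : EX k A P 1 = ModuleCat.of (Unitization k A) P := by simp [EX]

lemma EX_zero : EX k A P 0 = ModuleCat.of (Unitization k A) (Psharp k A P) := by simp [EX]

/-- The two-term chain complex `E` with `P` in degree `1`, `P♯` in degree `0` and
differential `φ`. -/
noncomputable def Ecomplex (φ : P →ₗ[Unitization k A] Psharp k A P) :
    ChainComplex (ModuleCat.{0} (Unitization k A)) ℤ where
  X := EX k A P
  d i j :=
    if h : i = 1 ∧ j = 0 then
      eqToHom (show EX k A P i = ModuleCat.of (Unitization k A) P by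
          rw [h.1, EX_one]) ≫ ModuleCat.ofHom φ ≫
        eqToHom (show ModuleCat.of (Unitization k A) (Psharp k A P) = EX k A P j by
          rw [h.2, EX_zero])
    else 0
  shape i j h := by
    rw [dif_neg]
    rintro ⟨rfl, rfl⟩
    exact h (by simp)
  d_comp_d' i j k' hij hjk := by
    by_cases h2 : j = 1 ∧ k' = 0
    · have h1 : ¬ (i = 1 ∧ j = 0) := fun hc => by omega
      rw [dif_neg h1]; simp
    · rw [dif_neg h2]; simp

section MyAux
variable {k : Type} [Field k] {A : Type} [NonUnitalRing A] [Module k A]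
  [SMulCommClass k A A] [IsScalarTower k A A]
  {P : Type} [AddCommGroup P] [Module (Unitization k A) P]

lemma mem_idealA (u : Unitization k A) :
    u - algebraMap k (Unitization k A) u.fst ∈ idealA k A := by
  have : (u - algebraMap k (Unitization k A) u.fst).fst = 0 := by
    rw [Unitization.algebraMap_eq_inl]
    change u.fst - u.fst = 0
    rw [sub_self]
  simpa [idealA, RingHom.mem_ker] using this

lemma smul_sub_mem (u : Unitization k A) (x : P) :
    u • x - algebraMap k (Unitization k A) u.fst • x
      ∈ idealA k A • (⊤ : Submodule (Unitization k A) P) := by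
  rw [← sub_smul]
  exact Submodule.smul_mem_smul (mem_idealA u) Submodule.mem_top

lemma quot_ksmul (c : k) (x : P ⧸ AP k A P) :
    c • x = algebraMap k (Unitization k A) c • x := rfl

lemma quot_smul (u : Unitization k A) (x : P ⧸ AP k A P) :
    u • x = u.fst • x := by
  obtain ⟨p, rfl⟩ := Submodule.Quotient.mk_surjective _ x
  show u • (Submodule.Quotient.mk p : P ⧸ AP k A P) = algebraMap k (Unitization k A) u.fst • (Submodule.Quotient.mk p : P ⧸ AP k A P)
  rw [← Submodule.Quotient.mk_smul, ← Submodule.Quotient.mk_smul]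
  exact (Submodule.Quotient.eq _).mpr (smul_sub_mem u p)

lemma finV (hPfin : Module.Finite (Unitization k A) P) :
    Module.Finite k (P ⧸ AP k A P) := by
  obtain ⟨S, hS⟩ := hPfin.fg_top
  set T : Set (P ⧸ AP k A P) := (Submodule.mkQ (AP k A P)) '' ↑S with hT
  have hTfin : T.Finite := S.finite_toSet.image _
  have hspanU : Submodule.span (Unitization k A) T = ⊤ := by
    rw [hT, ← Submodule.map_span, hS, Submodule.map_top, Submodule.range_mkQ]
  let W : Submodule (Unitization k A) (P ⧸ AP k A P) :=
    { carrier := (Submodule.span k T : Submodule k _)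
      add_mem' := fun h1 h2 => add_mem h1 h2
      zero_mem' := zero_mem _
      smul_mem' := fun u x hx => by
        show u • x ∈ Submodule.span k T
        rw [quot_smul]
        exact Submodule.smul_mem _ _ hx }
  have hW : Submodule.span k T = ⊤ := by
    have h1 : (⊤ : Submodule (Unitization k A) (P ⧸ AP k A P)) ≤ W := by
      rw [← hspanU]
      exact Submodule.span_le.mpr Submodule.subset_span
    rw [eq_top_iff]
    intro x _
    exact h1 Submodule.mem_top
  exact ⟨Submodule.fg_def.mpr ⟨T, hTfin, hW⟩⟩

end MyAux
set_option maxHeartbeats 1000000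
section MyAux2
variable {k : Type} [Field k] {A : Type} [NonUnitalRing A] [Module k A]
  [SMulCommClass k A A] [IsScalarTower k A A]
  {P : Type} [AddCommGroup P] [Module (Unitization k A) P]

/-- Identity coercion from the tensor product to `Psharp`. -/
abbrev toSharp (x : (P ⧸ AP k A P) ⊗[k] (Unitization k A)) : Psharp k A P := x

lemma psharp_smul_def (u : Unitization k A) (x : Psharp k A P) :
    u • x = toSharp (LinearMap.lTensor (P ⧸ AP k A P) (LinearMap.mulLeft k u) x) := rfl

lemma psharp_smul_tmul (u w : Unitization k A) (v : P ⧸ AP k A P) :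
    u • toSharp (v ⊗ₜ[k] w) = toSharp (v ⊗ₜ[k] (u * w)) := by
  rw [psharp_smul_def]
  show toSharp ((LinearMap.lTensor (P ⧸ AP k A P) (LinearMap.mulLeft k u)) (v ⊗ₜ[k] w)) = _
  rw [LinearMap.lTensor_tmul, LinearMap.mulLeft_apply]

/-- The underlying `k`-linear equivalence. -/
noncomputable def sharpE0 (ι : Type) [DecidableEq ι] (b : Module.Basis ι k (P ⧸ AP k A P)) :
    (P ⧸ AP k A P) ⊗[k] (Unitization k A) ≃ₗ[k] (ι →₀ Unitization k A) :=
  (TensorProduct.congr b.repr (LinearEquiv.refl k (Unitization k A))).trans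
    (TensorProduct.finsuppScalarLeft k (Unitization k A) ι)

lemma sharpE0_tmul {ι : Type} [DecidableEq ι] (b : Module.Basis ι k (P ⧸ AP k A P))
    (v : P ⧸ AP k A P) (u : Unitization k A) :
    sharpE0 ι b (v ⊗ₜ[k] u) = (b.repr v).sum fun i c => Finsupp.single i (c • u) := by
  rw [sharpE0, LinearEquiv.trans_apply, TensorProduct.congr_tmul, LinearEquiv.refl_apply,
    TensorProduct.finsuppScalarLeft_apply_tmul]

/-- The `U`-linear equivalence `P♯ ≃ (ι →₀ U)` induced by a `k`-basis of `P ⧸ A•P`. -/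
noncomputable def sharpEquivAux (ι : Type) [DecidableEq ι] (b : Module.Basis ι k (P ⧸ AP k A P)) :
    Psharp k A P ≃ₗ[Unitization k A] (ι →₀ Unitization k A) :=
  letI e0 := sharpE0 (P := P) ι b
  { toFun := e0
    map_add' := e0.map_add
    map_smul' := by
      intro u x
      show e0 (LinearMap.lTensor (P ⧸ AP k A P) (LinearMap.mulLeft k u) x) = u • e0 x
      induction x using TensorProduct.induction_on with
      | zero => rw [map_zero, map_zero, smul_zero]
      | tmul v w =>
        rw [LinearMap.lTensor_tmul, LinearMap.mulLeft_apply, sharpE0_tmul, sharpE0_tmul]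
        rw [Finsupp.smul_sum]
        refine Finsupp.sum_congr fun i _ => ?_
        rw [Finsupp.smul_single]
        congr 1
        rw [smul_eq_mul, ← mul_smul_comm]
      | add a c ha hc => rw [map_add, map_add, map_add, ha, hc, smul_add]
    invFun := e0.symm
    left_inv := e0.left_inv
    right_inv := e0.right_inv }

lemma sharpEquivAux_tmul {ι : Type} [DecidableEq ι] (b : Module.Basis ι k (P ⧸ AP k A P))
    (v : P ⧸ AP k A P) (u : Unitization k A) :
    sharpEquivAux ι b (toSharp (v ⊗ₜ[k] u))
      = (b.repr v).sum fun i c => Finsupp.single i (c • u) := by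
  show sharpE0 ι b (v ⊗ₜ[k] u) = _
  rw [sharpE0_tmul]

lemma eps_calc {ι : Type} [DecidableEq ι] (b : Module.Basis ι k (P ⧸ AP k A P)) (pf : ι → P)
    (hp : ∀ i, Submodule.mkQ (AP k A P) (pf i) = b i) (v : P ⧸ AP k A P) (u : Unitization k A) :
    Submodule.mkQ (AP k A P)
      ((Finsupp.linearCombination (Unitization k A) pf) (sharpEquivAux ι b (toSharp (v ⊗ₜ[k] u))))
      = u.fst • v := by
  rw [sharpEquivAux_tmul, map_finsuppSum, map_finsuppSum]
  have h1 : ((b.repr v).sum fun i c =>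
      Submodule.mkQ (AP k A P)
        ((Finsupp.linearCombination (Unitization k A) pf) (Finsupp.single i (c • u))))
      = (b.repr v).sum fun i c => u.fst • (c • b i) := by
    refine Finsupp.sum_congr fun i _ => ?_
    rw [Finsupp.linearCombination_single, map_smul, hp, quot_smul, Unitization.fst_smul,
      smul_eq_mul, mul_comm, mul_smul]
  rw [h1, ← Finsupp.smul_sum]
  congr 1
  conv_rhs => rw [← Module.Basis.linearCombination_repr b v]
  rw [Finsupp.linearCombination_apply]

lemma mk_tmul_eq (v : P ⧸ AP k A P) (u : Unitization k A) :
    Submodule.mkQ (idealA k A • (⊤ : Submodule (Unitization k A) (Psharp k A P)))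
        (toSharp (v ⊗ₜ[k] u))
      = Submodule.mkQ _ (toSharp (v ⊗ₜ[k] (algebraMap k (Unitization k A) u.fst))) := by
  rw [Submodule.mkQ_apply, Submodule.mkQ_apply, Submodule.Quotient.eq]
  have h : toSharp (v ⊗ₜ[k] u) - toSharp (v ⊗ₜ[k] algebraMap k (Unitization k A) u.fst)
      = (u - algebraMap k (Unitization k A) u.fst) • toSharp (v ⊗ₜ[k] (1 : Unitization k A)) := by
    rw [psharp_smul_tmul, mul_one]
    exact (TensorProduct.tmul_sub _ _ _).symm
  rw [h]
  exact Submodule.smul_mem_smul (mem_idealA u) Submodule.mem_top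

/-- The canonical map `τ : P → P♯ ⧸ A•P♯`, `p ↦ [π(p) ⊗ 1]`. -/
noncomputable def tauMap : P →ₗ[Unitization k A]
    (Psharp k A P) ⧸ (idealA k A • (⊤ : Submodule (Unitization k A) (Psharp k A P))) where
  toFun p := Submodule.mkQ _
    (toSharp ((Submodule.mkQ (AP k A P) p) ⊗ₜ[k] (1 : Unitization k A)))
  map_add' p q := by
    rw [map_add, TensorProduct.add_tmul]
    exact map_add _ _ _
  map_smul' u p := by
    rw [map_smul, quot_smul, TensorProduct.smul_tmul, RingHom.id_apply,
      ← Algebra.algebraMap_eq_smul_one, ← mk_tmul_eq]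
    simp only [Submodule.mkQ_apply]
    rw [← Submodule.Quotient.mk_smul, psharp_smul_tmul, mul_one]

lemma mk_sharp_eq (ψ : Psharp k A P →ₗ[Unitization k A] P)
    (hps : ∀ (v : P ⧸ AP k A P) (u : Unitization k A),
      Submodule.mkQ (AP k A P) (ψ (toSharp (v ⊗ₜ[k] u))) = u.fst • v)
    (q : Psharp k A P) :
    Submodule.mkQ (idealA k A • (⊤ : Submodule (Unitization k A) (Psharp k A P))) q
      = Submodule.mkQ _
        (toSharp ((Submodule.mkQ (AP k A P) (ψ q)) ⊗ₜ[k] (1 : Unitization k A))) := by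
  have key : ∀ x : (P ⧸ AP k A P) ⊗[k] (Unitization k A),
      Submodule.mkQ (idealA k A • (⊤ : Submodule (Unitization k A) (Psharp k A P))) (toSharp x)
        = Submodule.mkQ _
          (toSharp ((Submodule.mkQ (AP k A P) (ψ (toSharp x))) ⊗ₜ[k] (1 : Unitization k A))) := by
    intro x
    induction x using TensorProduct.induction_on with
    | zero =>
      rw [show toSharp 0 = 0 from rfl, map_zero, map_zero, map_zero,
        TensorProduct.zero_tmul, show toSharp 0 = 0 from rfl, map_zero]
    | tmul v u =>
      rw [hps v u, TensorProduct.smul_tmul, ← Algebra.algebraMap_eq_smul_one, ← mk_tmul_eq]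
    | add a c ha hc =>
      rw [show toSharp (a + c) = toSharp a + toSharp c from rfl, map_add, map_add, map_add,
        TensorProduct.add_tmul, show ∀ y z, toSharp (y + z) = toSharp y + toSharp z from
          fun _ _ => rfl, map_add, ha, hc]
  exact key q
end MyAux2
section MyAux3
variable {k : Type} [Field k] {A : Type} [NonUnitalRing A] [Module k A]
  [SMulCommClass k A A] [IsScalarTower k A A]
  {P : Type} [AddCommGroup P] [Module (Unitization k A) P]

lemma EX_subsingleton {n : ℤ} (h1 : n ≠ 1) (h0 : n ≠ 0) : Subsingleton (EX k A P n) := by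
  have h : EX k A P n = ModuleCat.of (Unitization k A) PUnit := by
    simp [EX, if_neg h1, if_neg h0]
  rw [h]
  exact inferInstanceAs (Subsingleton PUnit)

lemma hom_ext_subsingleton {R : Type} [Ring R] {X Y : ModuleCat.{0} R} (hY : Subsingleton Y)
    (f g : X ⟶ Y) : f = g :=
  ModuleCat.hom_ext (LinearMap.ext fun _ => Subsingleton.elim _ _)

lemma smulSubcomplex_d_zero {R : Type} [Ring R] (I : Ideal R)
    (M : ChainComplex (ModuleCat.{0} R) ℤ) {i j : ℤ} (h : M.d i j = 0) :
    (smulSubcomplex I M).d i j = 0 := by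
  apply ModuleCat.hom_ext; apply LinearMap.ext; intro x
  apply Subtype.ext
  show (M.d i j).hom x.1 = 0
  rw [h]
  rfl

lemma SX_subsingleton (φ : P →ₗ[Unitization k A] Psharp k A P) {n : ℤ}
    (h1 : n ≠ 1) (h0 : n ≠ 0) :
    Subsingleton ((smulSubcomplex (idealA k A) (Ecomplex k A P φ)).X n) := by
  haveI : Subsingleton ((Ecomplex k A P φ).X n) := EX_subsingleton h1 h0
  exact inferInstanceAs
    (Subsingleton ↥(idealA k A • (⊤ : Submodule (Unitization k A) ((Ecomplex k A P φ).X n))))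

lemma Ecomplex_d_ne (φ : P →ₗ[Unitization k A] Psharp k A P) {i j : ℤ}
    (h : ¬(i = 1 ∧ j = 0)) : (Ecomplex k A P φ).d i j = 0 :=
  dif_neg h

lemma rel10 : (ComplexShape.down ℤ).Rel 1 0 := by simp
lemma rel21 : (ComplexShape.down ℤ).Rel 2 1 := by simp
lemma rel0m1 : (ComplexShape.down ℤ).Rel 0 (-1) := by simp

variable (φ : P →ₗ[Unitization k A] Psharp k A P) (ψ : Psharp k A P →ₗ[Unitization k A] P)

/-- The degree-1 component of the retraction. -/
noncomputable def retrOne (hψφ : ∀ p : P, p - ψ (φ p) ∈ AP k A P) :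
    (Ecomplex k A P φ).X 1 ⟶ (smulSubcomplex (idealA k A) (Ecomplex k A P φ)).X 1 :=
  ModuleCat.ofHom (LinearMap.codRestrict (AP k A P) (LinearMap.id - ψ ∘ₗ φ)
    (fun p => by simpa using hψφ p))

/-- The degree-0 component of the retraction. -/
noncomputable def retrZero
    (hφψ : ∀ q : Psharp k A P,
      q - φ (ψ q) ∈ idealA k A • (⊤ : Submodule (Unitization k A) (Psharp k A P))) :
    (Ecomplex k A P φ).X 0 ⟶ (smulSubcomplex (idealA k A) (Ecomplex k A P φ)).X 0 :=
  ModuleCat.ofHom (LinearMap.codRestrict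
    (idealA k A • (⊤ : Submodule (Unitization k A) (Psharp k A P)))
    (LinearMap.id - φ ∘ₗ ψ) (fun q => by simpa using hφψ q))

/-- The retraction chain map `E ⟶ E·A`. -/
noncomputable def retr (hψφ : ∀ p : P, p - ψ (φ p) ∈ AP k A P)
    (hφψ : ∀ q : Psharp k A P,
      q - φ (ψ q) ∈ idealA k A • (⊤ : Submodule (Unitization k A) (Psharp k A P))) :
    Ecomplex k A P φ ⟶ smulSubcomplex (idealA k A) (Ecomplex k A P φ) where
  f n :=
    if h1 : n = 1 then
      eqToHom (show (Ecomplex k A P φ).X n = (Ecomplex k A P φ).X 1 by rw [h1]) ≫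
        retrOne φ ψ hψφ ≫
        eqToHom (show (smulSubcomplex (idealA k A) (Ecomplex k A P φ)).X 1 =
          (smulSubcomplex (idealA k A) (Ecomplex k A P φ)).X n by rw [h1])
    else if h0 : n = 0 then
      eqToHom (show (Ecomplex k A P φ).X n = (Ecomplex k A P φ).X 0 by rw [h0]) ≫
        retrZero φ ψ hφψ ≫
        eqToHom (show (smulSubcomplex (idealA k A) (Ecomplex k A P φ)).X 0 =
          (smulSubcomplex (idealA k A) (Ecomplex k A P φ)).X n by rw [h0])
    else 0
  comm' i j hij := by
    have hij' : j + 1 = i := hij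
    by_cases hj : j = 0
    · subst hj
      have hi : i = 1 := by omega
      subst hi
      apply ModuleCat.hom_ext; apply LinearMap.ext; intro p
      apply Subtype.ext
      show φ ((LinearMap.id - ψ ∘ₗ φ : P →ₗ[Unitization k A] P) p) = (LinearMap.id - φ ∘ₗ ψ : Psharp k A P →ₗ[Unitization k A] Psharp k A P) (φ p)
      simp only [LinearMap.sub_apply, LinearMap.comp_apply, LinearMap.id_apply, map_sub]
      exact map_sub φ p (ψ (φ p))
    · have hd : (Ecomplex k A P φ).d i j = 0 := Ecomplex_d_ne φ (fun hc => hj hc.2)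
      have hs : (smulSubcomplex (idealA k A) (Ecomplex k A P φ)).d i j = 0 :=
        smulSubcomplex_d_zero _ _ hd
      rw [hd, hs, Limits.zero_comp, Limits.comp_zero]

/-- Components of the homotopy on `E`. -/
noncomputable def hcompE : ∀ i j : ℤ, (Ecomplex k A P φ).X i ⟶ (Ecomplex k A P φ).X j :=
  fun i j =>
    if h : i = 0 ∧ j = 1 then
      eqToHom (show (Ecomplex k A P φ).X i = (Ecomplex k A P φ).X 0 by rw [h.1]) ≫
        (-(ModuleCat.ofHom ψ) : (Ecomplex k A P φ).X 0 ⟶ (Ecomplex k A P φ).X 1) ≫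
        eqToHom (show (Ecomplex k A P φ).X 1 = (Ecomplex k A P φ).X j by rw [h.2])
    else 0

/-- Components of the homotopy on `E·A`. -/
noncomputable def hcompS :
    ∀ i j : ℤ, (smulSubcomplex (idealA k A) (Ecomplex k A P φ)).X i ⟶
      (smulSubcomplex (idealA k A) (Ecomplex k A P φ)).X j :=
  fun i j =>
    if h : i = 0 ∧ j = 1 then
      eqToHom (show _ = (smulSubcomplex (idealA k A) (Ecomplex k A P φ)).X 0 by rw [h.1]) ≫
        (-(ModuleCat.ofHom (LinearMap.restrict ψ (smul_top_le (idealA k A) ψ))) :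
          (smulSubcomplex (idealA k A) (Ecomplex k A P φ)).X 0 ⟶
          (smulSubcomplex (idealA k A) (Ecomplex k A P φ)).X 1) ≫
        eqToHom (show (smulSubcomplex (idealA k A) (Ecomplex k A P φ)).X 1 = _ by rw [h.2])
    else 0

/-- Homotopy `retr ≫ incl ∼ id` on `E`. -/
noncomputable def homotopyE (hψφ : ∀ p : P, p - ψ (φ p) ∈ AP k A P)
    (hφψ : ∀ q : Psharp k A P,
      q - φ (ψ q) ∈ idealA k A • (⊤ : Submodule (Unitization k A) (Psharp k A P))) :
    Homotopy (retr φ ψ hψφ hφψ ≫ smulSubcomplexIncl (idealA k A) (Ecomplex k A P φ))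
      (𝟙 (Ecomplex k A P φ)) where
  hom := hcompE φ ψ
  zero i j hij := by
    refine dif_neg fun hc => hij ?_
    rw [hc.1, hc.2]
    exact rel10
  comm i := by
    by_cases hi1 : i = 1
    · subst hi1
      rw [dNext_eq _ rel10, prevD_eq _ rel21]
      have key : ∀ x : P, (LinearMap.id - ψ ∘ₗ φ : P →ₗ[Unitization k A] P) x
          = -(ψ (φ x)) + 0 + x := by
        intro x
        simp only [LinearMap.sub_apply, LinearMap.comp_apply, LinearMap.id_apply, add_zero]
        rw [sub_eq_neg_add]
      apply ModuleCat.hom_ext; apply LinearMap.ext; intro p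
      exact key p
    · by_cases hi0 : i = 0
      · subst hi0
        rw [dNext_eq _ rel0m1, prevD_eq _ rel10]
        have key : ∀ x : Psharp k A P,
            (LinearMap.id - φ ∘ₗ ψ : Psharp k A P →ₗ[Unitization k A] Psharp k A P) x
            = 0 + φ (-(ψ x)) + x := by
          intro x
          simp only [LinearMap.sub_apply, LinearMap.comp_apply, LinearMap.id_apply, map_neg,
            zero_add]
          rw [sub_eq_neg_add]
        apply ModuleCat.hom_ext; apply LinearMap.ext; intro q
        exact key q
      · exact hom_ext_subsingleton (EX_subsingleton hi1 hi0) _ _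

/-- Homotopy `incl ≫ retr ∼ id` on `E·A`. -/
noncomputable def homotopyS (hψφ : ∀ p : P, p - ψ (φ p) ∈ AP k A P)
    (hφψ : ∀ q : Psharp k A P,
      q - φ (ψ q) ∈ idealA k A • (⊤ : Submodule (Unitization k A) (Psharp k A P))) :
    Homotopy (smulSubcomplexIncl (idealA k A) (Ecomplex k A P φ) ≫ retr φ ψ hψφ hφψ)
      (𝟙 (smulSubcomplex (idealA k A) (Ecomplex k A P φ))) where
  hom := hcompS φ ψ
  zero i j hij := by
    refine dif_neg fun hc => hij ?_
    rw [hc.1, hc.2]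
    exact rel10
  comm i := by
    by_cases hi1 : i = 1
    · subst hi1
      rw [dNext_eq _ rel10, prevD_eq _ rel21]
      have key : ∀ x : P, (LinearMap.id - ψ ∘ₗ φ : P →ₗ[Unitization k A] P) x
          = -(ψ (φ x)) + 0 + x := by
        intro x
        simp only [LinearMap.sub_apply, LinearMap.comp_apply, LinearMap.id_apply, add_zero]
        rw [sub_eq_neg_add]
      apply ModuleCat.hom_ext; apply LinearMap.ext; intro p
      apply Subtype.ext
      exact key p.1
    · by_cases hi0 : i = 0
      · subst hi0
        rw [dNext_eq _ rel0m1, prevD_eq _ rel10]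
        have key : ∀ x : Psharp k A P,
            (LinearMap.id - φ ∘ₗ ψ : Psharp k A P →ₗ[Unitization k A] Psharp k A P) x
            = 0 + φ (-(ψ x)) + x := by
          intro x
          simp only [LinearMap.sub_apply, LinearMap.comp_apply, LinearMap.id_apply, map_neg,
            zero_add]
          rw [sub_eq_neg_add]
        apply ModuleCat.hom_ext; apply LinearMap.ext; intro q
        apply Subtype.ext
        exact key q.1
      · exact hom_ext_subsingleton (SX_subsingleton φ hi1 hi0) _ _
end MyAux3
/-- Let `A` be a non-unital algebra over a field `k`, `U = Unitization k A`, and `P` a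
finitely generated projective left `U`-module.  Set `P♯ := (P ⧸ A•P) ⊗ₖ U`.  Then:
(i) `P♯` is a finitely generated projective (indeed free) `U`-module;
(ii) there exist `U`-linear maps `φ : P → P♯` and `ψ : P♯ → P` with
`(id − ψ∘φ)(P) ⊆ A•P` and `(id − φ∘ψ)(P♯) ⊆ A•P♯`;
(iii) for any such `φ, ψ`, the inclusion of the subcomplex `E·A` into the two-term complex
`E = (P → P♯)` (with `P` in degree `1`, `P♯` in degree `0`, differential `φ`) is a homotopy
equivalence of chain complexes. -/
theorem stmt6 (hPfin : Module.Finite (Unitization k A) P)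
    (hPproj : Module.Projective (Unitization k A) P) :
    (Module.Finite (Unitization k A) (Psharp k A P) ∧
      Module.Free (Unitization k A) (Psharp k A P) ∧
      Module.Projective (Unitization k A) (Psharp k A P)) ∧
    (∃ (φ : P →ₗ[Unitization k A] Psharp k A P) (ψ : Psharp k A P →ₗ[Unitization k A] P),
      (∀ p : P, p - ψ (φ p) ∈ AP k A P) ∧
      (∀ q : Psharp k A P,
        q - φ (ψ q) ∈ idealA k A • (⊤ : Submodule (Unitization k A) (Psharp k A P)))) ∧
    (∀ (φ : P →ₗ[Unitization k A] Psharp k A P) (ψ : Psharp k A P →ₗ[Unitization k A] P),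
      (∀ p : P, p - ψ (φ p) ∈ AP k A P) →
      (∀ q : Psharp k A P,
        q - φ (ψ q) ∈ idealA k A • (⊤ : Submodule (Unitization k A) (Psharp k A P))) →
      ∃ e : HomotopyEquiv (smulSubcomplex (idealA k A) (Ecomplex k A P φ))
          (Ecomplex k A P φ),
        e.hom = smulSubcomplexIncl (idealA k A) (Ecomplex k A P φ)) := by
  classical
  haveI hV : Module.Finite k (P ⧸ AP k A P) := finV hPfin
  let ι := Module.Free.ChooseBasisIndex k (P ⧸ AP k A P)
  let b : Module.Basis ι k (P ⧸ AP k A P) := Module.Free.chooseBasis k (P ⧸ AP k A P)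
  let bs : Module.Basis ι (Unitization k A) (Psharp k A P) := Module.Basis.ofRepr (sharpEquivAux ι b)
  haveI hfree : Module.Free (Unitization k A) (Psharp k A P) := Module.Free.of_basis bs
  haveI hfin : Module.Finite (Unitization k A) (Psharp k A P) := Module.Finite.of_basis bs
  refine ⟨⟨hfin, hfree, inferInstance⟩, ?_, ?_⟩
  · have hsec : ∀ i : ι, ∃ p : P, Submodule.mkQ (AP k A P) p = b i := fun i =>
      Submodule.mkQ_surjective _ (b i)
    choose pf hp using hsec
    set ψ0 : Psharp k A P →ₗ[Unitization k A] P :=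
      (Finsupp.linearCombination (Unitization k A) pf) ∘ₗ (sharpEquivAux ι b).toLinearMap
      with hψ0
    have hps : ∀ (v : P ⧸ AP k A P) (u : Unitization k A),
        Submodule.mkQ (AP k A P) (ψ0 (toSharp (v ⊗ₜ[k] u))) = u.fst • v := fun v u =>
      eps_calc b pf hp v u
    obtain ⟨φ0, hφ0⟩ := Module.projective_lifting_property
      (Submodule.mkQ (idealA k A • (⊤ : Submodule (Unitization k A) (Psharp k A P))))
      (tauMap (k := k) (A := A) (P := P)) (Submodule.mkQ_surjective _)
    refine ⟨φ0, ψ0, ?_, ?_⟩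
    · intro p
      have h1 : Submodule.mkQ (idealA k A • (⊤ : Submodule (Unitization k A) (Psharp k A P)))
          (φ0 p) = tauMap (k := k) (A := A) (P := P) p := LinearMap.congr_fun hφ0 p
      have h2 : φ0 p - toSharp ((Submodule.mkQ (AP k A P) p) ⊗ₜ[k] (1 : Unitization k A))
          ∈ idealA k A • (⊤ : Submodule (Unitization k A) (Psharp k A P)) := by
        rw [← Submodule.Quotient.eq]
        exact h1
      have h3 : Submodule.mkQ (AP k A P) (ψ0 (φ0 p)) = Submodule.mkQ (AP k A P) p := by
        have hd := smul_top_le (idealA k A) ψ0 _ h2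
        have h4 : Submodule.mkQ (AP k A P)
            (ψ0 (φ0 p - toSharp ((Submodule.mkQ (AP k A P) p) ⊗ₜ[k] (1 : Unitization k A))))
            = 0 := (Submodule.Quotient.mk_eq_zero _).mpr hd
        rw [map_sub, map_sub, sub_eq_zero] at h4
        have h5 := hps (Submodule.mkQ (AP k A P) p) 1
        rw [Unitization.fst_one, one_smul] at h5
        rw [h4, h5]
      have h6 : Submodule.mkQ (AP k A P) (p - ψ0 (φ0 p)) = 0 := by
        rw [map_sub, h3, sub_self]
      exact (Submodule.Quotient.mk_eq_zero _).mp h6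
    · intro q
      have h4 := mk_sharp_eq ψ0 hps q
      have h5 : Submodule.mkQ (idealA k A • (⊤ : Submodule (Unitization k A) (Psharp k A P)))
          (φ0 (ψ0 q)) = tauMap (k := k) (A := A) (P := P) (ψ0 q) :=
        LinearMap.congr_fun hφ0 (ψ0 q)
      have h6 : Submodule.mkQ (idealA k A • (⊤ : Submodule (Unitization k A) (Psharp k A P))) q
          = Submodule.mkQ (idealA k A • (⊤ : Submodule (Unitization k A) (Psharp k A P)))
            (φ0 (ψ0 q)) := by
        rw [h4]
        exact h5.symm
      exact (Submodule.Quotient.eq _).mp h6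
  · intro φ ψ hψφ hφψ
    exact ⟨⟨smulSubcomplexIncl (idealA k A) (Ecomplex k A P φ), retr φ ψ hψφ hφψ,
      homotopyS φ ψ hψφ hφψ, homotopyE φ ψ hψφ hφψ⟩, rfl⟩
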